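/- Let X be a Hilbert space, A ⊆ B(X) a C*-subalgebra, M the strong operator closure of A with id_X ∈ M, and H a Hilbert A-module. If {x_α} is a bounded net in H•M and x ∈ H•M such that ⟨x_α − x, x_α − x⟩(v) → 0 in X for every v ∈ X, then for every y ∈ H•M with ‖y‖ ≤ 1 and every v ∈ X, ‖⟨y, x_α − x⟩(v)‖ → 0, uniformly over such y; and for every normal functional f ∈ M_*, sup{|f(⟨y, x_α − x⟩)| : ‖y‖ ≤ 1} → 0. -/

import Mathlib

open scoped RightActions ComplexOrder
open Filter Topology

/-- The right-module `CStarModule` class as it stood in the older Mathlib (inner product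
linear in the second argument for the right action `y <• a`); current Mathlib's
`CStarModule` is a left-module notion. -/
class CStarModuleRight (A E : Type*) [NonUnitalSemiring A] [StarRing A] [Module ℂ A]
    [AddCommGroup E] [Module ℂ E] [PartialOrder A] [SMul Aᵐᵒᵖ E] [Norm A] [Norm E]
    extends Inner A E where
  inner_add_right {x} {y} {z} : inner x (y + z) = inner x y + inner x z
  inner_self_nonneg {x} : 0 ≤ inner x x
  inner_self {x} : inner x x = 0 ↔ x = 0
  inner_op_smul_right {a : A} {x y : E} : inner x (y <• a) = inner x y * a
  inner_smul_right_complex {z : ℂ} {x} {y} : inner x (z • y) = z • inner x y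
  star_inner x y : star (inner x y) = inner y x
  norm_eq_sqrt_norm_inner_self x : ‖x‖ = √‖inner x x‖

section CSR

variable {X F : Type*} [NormedAddCommGroup X] [InnerProductSpace ℂ X] [CompleteSpace X]
  [NormedAddCommGroup F] [NormedSpace ℂ F] [SMul (X →L[ℂ] X)ᵐᵒᵖ F]
  [CStarModuleRight (X →L[ℂ] X) F]

lemma csr_inner_sub_right (x y z : F) :
    inner (𝕜 := X →L[ℂ] X) x (y - z) = inner (𝕜 := X →L[ℂ] X) x y - inner (𝕜 := X →L[ℂ] X) x z :=
  map_sub (AddMonoidHom.mk' (fun y => inner (𝕜 := X →L[ℂ] X) x y)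
    fun _ _ => CStarModuleRight.inner_add_right) y z

lemma csr_inner_sub_left (x y z : F) :
    inner (𝕜 := X →L[ℂ] X) (x - y) z = inner (𝕜 := X →L[ℂ] X) x z - inner (𝕜 := X →L[ℂ] X) y z := by
  rw [← CStarModuleRight.star_inner z, csr_inner_sub_right, star_sub,
    CStarModuleRight.star_inner, CStarModuleRight.star_inner]

lemma csr_inner_zero_left (y : F) : inner (𝕜 := X →L[ℂ] X) (0 : F) y = 0 := by
  have := csr_inner_sub_left (X := X) y y y
  simpa using this

lemma csr_inner_op_smul_left (a : X →L[ℂ] X) (x y : F) :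
    inner (𝕜 := X →L[ℂ] X) (x <• a) y = star a * inner (𝕜 := X →L[ℂ] X) x y := by
  rw [← CStarModuleRight.star_inner y, CStarModuleRight.inner_op_smul_right, star_mul,
    CStarModuleRight.star_inner]

lemma csr_inner_smul_right_real (r : ℝ) (x y : F) :
    inner (𝕜 := X →L[ℂ] X) x (r • y) = r • inner (𝕜 := X →L[ℂ] X) x y := by
  rw [← Complex.coe_smul, CStarModuleRight.inner_smul_right_complex, Complex.coe_smul]

lemma csr_inner_smul_left_real (r : ℝ) (x y : F) :
    inner (𝕜 := X →L[ℂ] X) (r • x) y = r • inner (𝕜 := X →L[ℂ] X) x y := by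
  rw [← CStarModuleRight.star_inner y, csr_inner_smul_right_real, star_smul, star_trivial,
    CStarModuleRight.star_inner]

set_option synthInstance.maxHeartbeats 400000 in
lemma csr_cs (x y : F) :
    inner (𝕜 := X →L[ℂ] X) y x * inner (𝕜 := X →L[ℂ] X) x y
      ≤ ‖x‖ ^ 2 • inner (𝕜 := X →L[ℂ] X) y y := by
  rcases eq_or_ne x 0 with h | h
  · subst h
    rw [csr_inner_zero_left, ← CStarModuleRight.star_inner (0 : F), csr_inner_zero_left]
    simp
  · have hx : 0 < ‖x‖ := norm_pos_iff.mpr h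
    set a : X →L[ℂ] X := inner (𝕜 := X →L[ℂ] X) x y with ha
    have hsa : star a = inner (𝕜 := X →L[ℂ] X) y x := CStarModuleRight.star_inner x y
    set s : ℝ := ‖x‖ ^ 2 with hs
    have hs0 : 0 < s := by positivity
    have h0 : (0 : X →L[ℂ] X) ≤ inner (𝕜 := X →L[ℂ] X) (x <• a - s • y) (x <• a - s • y) :=
      CStarModuleRight.inner_self_nonneg
    have hexp : inner (𝕜 := X →L[ℂ] X) (x <• a - s • y) (x <• a - s • y)
        = star a * inner (𝕜 := X →L[ℂ] X) x x * a - s • (star a * a) - s • (star a * a)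
          + s • (s • inner (𝕜 := X →L[ℂ] X) y y) := by
      rw [csr_inner_sub_right, csr_inner_sub_left, csr_inner_sub_left,
        CStarModuleRight.inner_op_smul_right, CStarModuleRight.inner_op_smul_right,
        csr_inner_op_smul_left, csr_inner_op_smul_left, csr_inner_smul_left_real,
        csr_inner_smul_left_real, csr_inner_smul_right_real, csr_inner_smul_right_real,
        ← hsa, ← ha, smul_mul_assoc, mul_smul_comm]
      abel
    have hxx : ‖inner (𝕜 := X →L[ℂ] X) x x‖ = s := by
      rw [hs, CStarModuleRight.norm_eq_sqrt_norm_inner_self (A := X →L[ℂ] X) x,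
        Real.sq_sqrt (norm_nonneg _)]
    have hle : star a * inner (𝕜 := X →L[ℂ] X) x x * a ≤ s • (star a * a) := by
      have := CStarAlgebra.star_left_conjugate_le_norm_smul (a := a)
        (b := inner (𝕜 := X →L[ℂ] X) x x) (CStarModuleRight.star_inner x x)
      rwa [hxx] at this
    rw [hexp] at h0
    have h3 : s • (star a * a) ≤ s • (s • inner (𝕜 := X →L[ℂ] X) y y) := by
      rw [← sub_nonneg]
      have e : s • (s • inner (𝕜 := X →L[ℂ] X) y y) - s • (star a * a)
          = (star a * inner (𝕜 := X →L[ℂ] X) x x * a - s • (star a * a) - s • (star a * a)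
            + s • (s • inner (𝕜 := X →L[ℂ] X) y y))
            + (s • (star a * a) - star a * inner (𝕜 := X →L[ℂ] X) x x * a) := by abel
      rw [e]
      exact add_nonneg h0 (sub_nonneg.mpr hle)
    rw [smul_le_smul_iff_of_pos_left hs0, hsa] at h3
    exact h3

variable (F) in
lemma csr_norm_inner_le {x y : F} :
    ‖inner (𝕜 := X →L[ℂ] X) x y‖ ≤ ‖x‖ * ‖y‖ := by
  have h1 : ‖inner (𝕜 := X →L[ℂ] X) x y‖ ^ 2 ≤ (‖x‖ * ‖y‖) ^ 2 :=
    calc ‖inner (𝕜 := X →L[ℂ] X) x y‖ ^ 2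
        = ‖star (inner (𝕜 := X →L[ℂ] X) x y) * inner (𝕜 := X →L[ℂ] X) x y‖ := by
          rw [CStarRing.norm_star_mul_self, pow_two]
      _ = ‖inner (𝕜 := X →L[ℂ] X) y x * inner (𝕜 := X →L[ℂ] X) x y‖ := by
          rw [CStarModuleRight.star_inner]
      _ ≤ ‖‖x‖ ^ 2 • inner (𝕜 := X →L[ℂ] X) y y‖ :=
          CStarAlgebra.norm_le_norm_of_nonneg_of_le
            (by rw [← CStarModuleRight.star_inner x y]; exact star_mul_self_nonneg _) (csr_cs x y)
      _ = ‖x‖ ^ 2 * ‖inner (𝕜 := X →L[ℂ] X) y y‖ := by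
          rw [norm_smul, Real.norm_of_nonneg (by positivity)]
      _ = ‖x‖ ^ 2 * ‖y‖ ^ 2 := by
          rw [CStarModuleRight.norm_eq_sqrt_norm_inner_self (A := X →L[ℂ] X) y,
            Real.sq_sqrt (norm_nonneg _)]
      _ = (‖x‖ * ‖y‖) ^ 2 := by ring
  exact (pow_le_pow_iff_left₀ (norm_nonneg _) (by positivity) two_ne_zero).mp h1

end CSR

lemma key_cs {X F : Type*} [NormedAddCommGroup X] [InnerProductSpace ℂ X] [CompleteSpace X]
    [NormedAddCommGroup F] [NormedSpace ℂ F] [SMul (X →L[ℂ] X)ᵐᵒᵖ F]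
    [CStarModuleRight (X →L[ℂ] X) F] (y z : F) (hy : ‖y‖ ≤ 1) (v : X) :
    ‖(inner (𝕜 := X →L[ℂ] X) y z) v‖ ^ 2 ≤ ‖(inner (𝕜 := X →L[ℂ] X) z z) v‖ * ‖v‖ := by
  set T : X →L[ℂ] X := inner (𝕜 := X →L[ℂ] X) y z with hT
  set S : X →L[ℂ] X := inner (𝕜 := X →L[ℂ] X) z z with hS
  have hcs : star T * T ≤ ‖y‖ ^ 2 • S := by
    simpa [hT, hS, CStarModuleRight.star_inner] using
      csr_cs (X := X) y z
  have hpos : ((‖y‖ ^ 2 • S) - star T * T).IsPositive :=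
    (ContinuousLinearMap.le_def _ _).mp hcs
  have h1 : ‖T v‖ ^ 2 = Complex.re (inner (𝕜 := ℂ) ((star T * T) v) v) := by
    rw [ContinuousLinearMap.star_eq_adjoint, ContinuousLinearMap.mul_apply,
      ContinuousLinearMap.adjoint_inner_left]
    rw [← inner_self_eq_norm_sq (𝕜 := ℂ)]
    rfl
  have h2 : Complex.re (inner (𝕜 := ℂ) ((star T * T) v) v)
      ≤ Complex.re (inner (𝕜 := ℂ) ((‖y‖ ^ 2 • S) v) v) := by
    have h := hpos.inner_nonneg_left v
    rw [ContinuousLinearMap.sub_apply, inner_sub_left, sub_nonneg] at h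
    exact (Complex.le_def.mp h).1
  have h3 : Complex.re (inner (𝕜 := ℂ) ((‖y‖ ^ 2 • S) v) v)
      = ‖y‖ ^ 2 * Complex.re (inner (𝕜 := ℂ) (S v) v) := by
    rw [ContinuousLinearMap.smul_apply, RCLike.real_smul_eq_coe_smul (K := ℂ), inner_smul_left]
    simp [Complex.mul_re, ← Complex.ofReal_pow]
  have hS0 : 0 ≤ Complex.re (inner (𝕜 := ℂ) (S v) v) := by
    have h0 : (0 : X →L[ℂ] X) ≤ S := CStarModuleRight.inner_self_nonneg
    have := ((ContinuousLinearMap.nonneg_iff_isPositive S).mp h0).inner_nonneg_left v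
    simpa using (Complex.le_def.mp this).1
  have h4 : Complex.re (inner (𝕜 := ℂ) (S v) v) ≤ ‖S v‖ * ‖v‖ := by
    have := (RCLike.re_le_norm (inner (𝕜 := ℂ) (S v) v)).trans (norm_inner_le_norm (S v) v)
    simpa using this
  have hy2 : ‖y‖ ^ 2 ≤ 1 := by nlinarith [norm_nonneg y]
  calc ‖T v‖ ^ 2 ≤ ‖y‖ ^ 2 * Complex.re (inner (𝕜 := ℂ) (S v) v) := by rw [h1, ← h3]; exact h2
    _ ≤ 1 * (‖S v‖ * ‖v‖) := mul_le_mul hy2 h4 hS0 zero_le_one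
    _ = ‖S v‖ * ‖v‖ := one_mul _

/-- let `F` be a Hilbert module over the von Neumann algebra of bounded
operators on a Hilbert space `X` (the setting of `H • M` with inner product valued in
`M ⊆ B(X)`).  If `{x_α}` is a bounded net in `F` and `x₀ ∈ F` with
`⟨x_α − x₀, x_α − x₀⟩(v) → 0` for every `v ∈ X`, then `‖⟨y, x_α − x₀⟩(v)‖ → 0` uniformly
over `‖y‖ ≤ 1`; moreover for every normal functional `f = Σₖ ⟪· vₖ, wₖ⟫` (with
`Σ‖vₖ‖², Σ‖wₖ‖² < ∞`), `sup_{‖y‖≤1} |f(⟨y, x_α − x₀⟩)| → 0`. -/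
theorem sot_convergence_uniform_inner
    {X F ι : Type*} [NormedAddCommGroup X] [InnerProductSpace ℂ X] [CompleteSpace X]
    [NormedAddCommGroup F] [NormedSpace ℂ F] [SMul (X →L[ℂ] X)ᵐᵒᵖ F]
    [CStarModuleRight (X →L[ℂ] X) F]
    (l : Filter ι)
    (x : ι → F) (x₀ : F)
    (hbd : ∃ C : ℝ, ∀ i, ‖x i‖ ≤ C)
    (hconv : ∀ v : X,
      Tendsto (fun i => (inner (𝕜 := X →L[ℂ] X) (x i - x₀) (x i - x₀)) v) l (𝓝 0)) :
    (∀ (v : X) (ε : ℝ), 0 < ε → ∀ᶠ i in l, ∀ y : F, ‖y‖ ≤ 1 →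
      ‖(inner (𝕜 := X →L[ℂ] X) y (x i - x₀)) v‖ ≤ ε) ∧
    (∀ vv ww : ℕ → X, Summable (fun k => ‖vv k‖ ^ 2) → Summable (fun k => ‖ww k‖ ^ 2) →
      ∀ ε : ℝ, 0 < ε → ∀ᶠ i in l, ∀ y : F, ‖y‖ ≤ 1 →
        ‖∑' k, (inner ℂ ((inner (𝕜 := X →L[ℂ] X) y (x i - x₀)) (vv k)) (ww k) : ℂ)‖ ≤ ε) := by
  have H1 : ∀ (v : X) (ε : ℝ), 0 < ε → ∀ᶠ i in l, ∀ y : F, ‖y‖ ≤ 1 →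
      ‖(inner (𝕜 := X →L[ℂ] X) y (x i - x₀)) v‖ ≤ ε := by
    intro v ε hε
    have hδ : 0 < ε ^ 2 / (‖v‖ + 1) := by positivity
    filter_upwards [Metric.tendsto_nhds.mp (hconv v) _ hδ] with i hi y hy
    rw [dist_zero_right] at hi
    have hk := key_cs y (x i - x₀) hy v
    have hle : ‖(inner (𝕜 := X →L[ℂ] X) (x i - x₀) (x i - x₀)) v‖ * ‖v‖
        ≤ (ε ^ 2 / (‖v‖ + 1)) * (‖v‖ + 1) :=
      mul_le_mul hi.le (by linarith [norm_nonneg v]) (norm_nonneg v) hδ.le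
    have hne : (‖v‖ + 1) ≠ 0 := by positivity
    rw [div_mul_cancel₀ _ hne] at hle
    nlinarith [norm_nonneg ((inner (𝕜 := X →L[ℂ] X) y (x i - x₀)) v)]
  refine ⟨H1, ?_⟩
  intro vv ww hv hw ε hε
  obtain ⟨C, hC⟩ := hbd
  set D : ℝ := max (C + ‖x₀‖) 0 with hD
  have hD0 : 0 ≤ D := le_max_right _ _
  have hDz : ∀ i, ‖x i - x₀‖ ≤ D := fun i =>
    ((norm_sub_le _ _).trans (add_le_add_left (hC i) _)).trans (le_max_left _ _)
  set g : ℕ → ℝ := fun k => ‖vv k‖ * ‖ww k‖ with hgdef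
  have hg : Summable g := by
    refine Summable.of_nonneg_of_le (fun k => by positivity) (fun k => ?_) (hv.add hw)
    have := sq_nonneg (‖vv k‖ - ‖ww k‖)
    simp only [hgdef]
    nlinarith [norm_nonneg (vv k), norm_nonneg (ww k)]
  have hδ : 0 < ε / (2 * (D + 1)) := by positivity
  obtain ⟨N, hN⟩ : ∃ N, ∑' k, g (k + N) < ε / (2 * (D + 1)) := by
    have := tendsto_sum_nat_add g
    exact (this.eventually (gt_mem_nhds hδ)).exists
  have hall : ∀ᶠ i in l, ∀ k ∈ Finset.range N, ∀ y : F, ‖y‖ ≤ 1 →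
      ‖(inner (𝕜 := X →L[ℂ] X) y (x i - x₀)) (vv k)‖
        ≤ ε / (2 * (N + 1) * (‖ww k‖ + 1)) :=
    (Finset.range N).eventually_all.mpr fun k _ => H1 (vv k) _ (by positivity)
  filter_upwards [hall] with i hi y hy
  set T : X →L[ℂ] X := inner (𝕜 := X →L[ℂ] X) y (x i - x₀) with hTdef
  set c : ℕ → ℂ := fun k => inner (𝕜 := ℂ) (T (vv k)) (ww k) with hcdef
  have hTnorm : ‖T‖ ≤ D := by
    refine (csr_norm_inner_le F).trans ?_
    calc ‖y‖ * ‖x i - x₀‖ ≤ 1 * D :=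
          mul_le_mul hy (hDz i) (norm_nonneg _) zero_le_one
      _ = D := one_mul _
  have hTv : ∀ v : X, ‖T v‖ ≤ D * ‖v‖ := fun v =>
    (T.le_opNorm v).trans (mul_le_mul_of_nonneg_right hTnorm (norm_nonneg v))
  have hc : ∀ k, ‖c k‖ ≤ D * g k := fun k =>
    calc ‖c k‖ ≤ ‖T (vv k)‖ * ‖ww k‖ := norm_inner_le_norm _ _
      _ ≤ (D * ‖vv k‖) * ‖ww k‖ :=
          mul_le_mul_of_nonneg_right (hTv _) (norm_nonneg _)
      _ = D * g k := by simp [hgdef]; ring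
  have hcsum : Summable c := Summable.of_norm_bounded (hg.mul_left D) hc
  have hgN : Summable (fun k => g (k + N)) := (summable_nat_add_iff N).mpr hg
  have hcN : Summable (fun k => ‖c (k + N)‖) :=
    Summable.of_nonneg_of_le (fun _ => norm_nonneg _) (fun k => hc _) (hgN.mul_left D)
  have hsplit := Summable.sum_add_tsum_nat_add N hcsum
  rw [← hsplit]
  have hgN0 : 0 ≤ ∑' k, g (k + N) :=
    tsum_nonneg fun k => by positivity
  have htail : ‖∑' k, c (k + N)‖ ≤ ε / 2 := by
    have h1 : ‖∑' k, c (k + N)‖ ≤ ∑' k, ‖c (k + N)‖ := norm_tsum_le_tsum_norm hcN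
    have h2 : ∑' k, ‖c (k + N)‖ ≤ ∑' k, D * g (k + N) :=
      Summable.tsum_le_tsum (fun k => hc _) hcN (hgN.mul_left D)
    have h3 : ∑' k, D * g (k + N) = D * ∑' k, g (k + N) := tsum_mul_left
    have h4 : D * ∑' k, g (k + N) ≤ D * (ε / (2 * (D + 1))) :=
      mul_le_mul_of_nonneg_left hN.le hD0
    have h5 : D * (ε / (2 * (D + 1))) ≤ ε / 2 := by
      rw [mul_div_assoc'] at *
      rw [div_le_div_iff₀ (by linarith) (by norm_num)]
      nlinarith
    linarith
  have hhead : ‖∑ k ∈ Finset.range N, c k‖ ≤ ε / 2 := by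
    have hterm : ∀ k ∈ Finset.range N, ‖c k‖ ≤ ε / (2 * (N + 1)) := by
      intro k hk
      have hb := hi k hk y hy
      have hne : (‖ww k‖ + 1) ≠ 0 := by positivity
      calc ‖c k‖ ≤ ‖T (vv k)‖ * ‖ww k‖ := norm_inner_le_norm _ _
        _ ≤ (ε / (2 * (N + 1) * (‖ww k‖ + 1))) * (‖ww k‖ + 1) :=
            mul_le_mul hb (by linarith [norm_nonneg (ww k)]) (norm_nonneg _) (by positivity)
        _ = ε / (2 * (N + 1)) := by field_simp
    calc ‖∑ k ∈ Finset.range N, c k‖ ≤ ∑ k ∈ Finset.range N, ‖c k‖ :=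
          norm_sum_le _ _
      _ ≤ ∑ _k ∈ Finset.range N, (ε / (2 * (N + 1))) := Finset.sum_le_sum hterm
      _ = N * (ε / (2 * (N + 1))) := by
          rw [Finset.sum_const, Finset.card_range]; simp [nsmul_eq_mul]
      _ ≤ ε / 2 := by
          have hN1 : (0:ℝ) < (N:ℝ) + 1 := by positivity
          rw [mul_div_assoc'] at *
          rw [div_le_div_iff₀ (by linarith) (by norm_num)]
          nlinarith [Nat.cast_nonneg (α := ℝ) N]
  calc ‖∑ k ∈ Finset.range N, c k + ∑' k, c (k + N)‖
      ≤ ‖∑ k ∈ Finset.range N, c k‖ + ‖∑' k, c (k + N)‖ := norm_add_le _ _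
    _ ≤ ε / 2 + ε / 2 := add_le_add hhead htail
    _ = ε := by ring
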